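/- arXiv:1505.02717 — 4 statements merged into one kernel-verified Lean document; each statement's English description precedes it below -/
import Mathlib

section
/- If sequences a_k and b_k satisfy linear recurrences with characteristic polynomials ∏_i (t−ρ_i)^{p_i} and ∏_j (t−σ_j)^{q_j} respectively, then the pointwise product a_k·b_k satisfies a linear recurrence with characteristic polynomial ∏_{i,j} (t − ρ_iσ_j)^{p_i+q_j−1}, where the product is over pairs (i,j) with p_i ≥ 1 and q_j ≥ 1. -/
open Polynomial Finset

/-- `a` satisfies the linear recurrence with monic characteristic polynomial `χ`. -/
def SatisfiesLinRec {K : Type*} [Field K] (a : ℕ → K) (χ : Polynomial K) : Prop :=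
  ∀ k : ℕ, ∑ i ∈ Finset.range (χ.natDegree + 1), χ.coeff i * a (k + i) = 0

noncomputable section
variable {K : Type*} [Field K]

def shiftMap (K : Type*) [Field K] : Module.End K (ℕ → K) where
  toFun a := fun k => a (k + 1)
  map_add' _ _ := rfl
  map_smul' _ _ := rfl

def act (P : K[X]) (a : ℕ → K) : ℕ → K := aeval (shiftMap K) P a

lemma shift_pow (i : ℕ) : ∀ (a : ℕ → K) (k : ℕ), ((shiftMap K) ^ i) a k = a (k + i) := by
  induction i with
  | zero => intro a k; simp
  | succ n ih =>
    intro a k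
    rw [pow_succ, Module.End.mul_apply, ih]
    rfl

lemma act_apply (P : K[X]) (a : ℕ → K) (k : ℕ) :
    act P a k = ∑ i ∈ Finset.range (P.natDegree + 1), P.coeff i * a (k + i) := by
  unfold act
  rw [aeval_eq_sum_range]
  simp [LinearMap.sum_apply, Finset.sum_apply, shift_pow]

lemma sat_iff (χ : K[X]) (a : ℕ → K) : SatisfiesLinRec a χ ↔ act χ a = 0 := by
  constructor
  · intro h; funext k; rw [act_apply]; exact h k
  · intro h k; rw [← act_apply, h]; rfl

lemma act_mul (P Q : K[X]) (a : ℕ → K) : act (P * Q) a = act P (act Q a) := by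
  unfold act; rw [map_mul]; rfl

lemma act_one (a : ℕ → K) : act 1 a = a := by
  unfold act; rw [map_one]; rfl

lemma act_zero (P : K[X]) : act P (0 : ℕ → K) = 0 := map_zero (aeval (shiftMap K) P)

lemma act_smul (P : K[X]) (c : K) (a : ℕ → K) : act P (c • a) = c • act P a :=
  map_smul (aeval (shiftMap K) P) c a

lemma act_add_seq (P : K[X]) (x y : ℕ → K) : act P (x + y) = act P x + act P y :=
  map_add (aeval (shiftMap K) P) x y

lemma act_add_poly (P Q : K[X]) (a : ℕ → K) : act (P + Q) a = act P a + act Q a := by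
  unfold act; rw [map_add]; rfl

lemma act_sum (P : K[X]) {ι : Type*} (t : Finset ι) (c : ι → ℕ → K) :
    act P (∑ i ∈ t, c i) = ∑ i ∈ t, act P (c i) :=
  map_sum (aeval (shiftMap K) P) c t

lemma act_X (a : ℕ → K) (k : ℕ) : act X a k = a (k + 1) := by
  unfold act; rw [aeval_X]; rfl

lemma act_linear (c : K) (a : ℕ → K) (k : ℕ) : act (X - C c) a k = a (k + 1) - c * a k := by
  rw [act_apply, natDegree_X_sub_C]
  simp [Finset.sum_range_succ, coeff_X, coeff_C]
  ring

lemma act_step (r g : K) (a b : ℕ → K) :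
    act (X - C (r * g)) (a * b) =
      (act (X - C r) a) * (act X b) + (r • a) * (act (X - C g) b) := by
  funext k
  simp only [Pi.add_apply, Pi.mul_apply, Pi.smul_apply, smul_eq_mul, act_linear, act_X]
  ring

lemma key (r g : K) : ∀ n p q : ℕ, p + q = n → 1 ≤ p → 1 ≤ q → ∀ a b : ℕ → K,
    act (((X : K[X]) - C r) ^ p) a = 0 → act (((X : K[X]) - C g) ^ q) b = 0 →
    act (((X : K[X]) - C (r * g)) ^ (p + q - 1)) (a * b) = 0 := by
  intro n
  induction n with
  | zero => intro p q hpq hp hq; omega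
  | succ n ih =>
    intro p q hpq hp hq a b ha hb
    have hm : p + q - 1 = (p + q - 2) + 1 := by omega
    rw [hm, pow_succ, act_mul, act_step, act_add_seq]
    have h1 : act (((X : K[X]) - C (r * g)) ^ (p + q - 2))
        ((act (X - C r) a) * (act X b)) = 0 := by
      rcases Nat.eq_or_lt_of_le hp with hp1 | hp2
      · have : act ((X : K[X]) - C r) a = 0 := by
          rw [← pow_one ((X : K[X]) - C r), hp1]; exact ha
        rw [this, zero_mul, act_zero]
      · have ha' : act (((X : K[X]) - C r) ^ (p - 1)) (act (X - C r) a) = 0 := by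
          rw [← act_mul, ← pow_succ]
          have : p - 1 + 1 = p := by omega
          rw [this]; exact ha
        have hb' : act (((X : K[X]) - C g) ^ q) (act X b) = 0 := by
          rw [← act_mul, mul_comm, act_mul, hb, act_zero]
        have := ih (p - 1) q (by omega) (by omega) hq _ _ ha' hb'
        have he : p - 1 + q - 1 = p + q - 2 := by omega
        rwa [he] at this
    have h2 : act (((X : K[X]) - C (r * g)) ^ (p + q - 2))
        ((r • a) * (act (X - C g) b)) = 0 := by
      rcases Nat.eq_or_lt_of_le hq with hq1 | hq2
      · have : act ((X : K[X]) - C g) b = 0 := by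
          rw [← pow_one ((X : K[X]) - C g), hq1]; exact hb
        rw [this, mul_zero, act_zero]
      · have ha' : act (((X : K[X]) - C r) ^ p) (r • a) = 0 := by
          rw [act_smul, ha, smul_zero]
        have hb' : act (((X : K[X]) - C g) ^ (q - 1)) (act (X - C g) b) = 0 := by
          rw [← act_mul, ← pow_succ]
          have : q - 1 + 1 = q := by omega
          rw [this]; exact hb
        have := ih p (q - 1) (by omega) hp (by omega) _ _ ha' hb'
        have he : p + (q - 1) - 1 = p + q - 2 := by omega
        rwa [he] at this
    rw [h1, h2, add_zero]

lemma decomp {ι : Type*} [DecidableEq ι] (f : ι → K[X])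
    (hcop : ∀ i j, i ≠ j → IsCoprime (f i) (f j)) (t : Finset ι) :
    ∀ a : ℕ → K, act (∏ i ∈ t, f i) a = 0 →
    ∃ c : ι → (ℕ → K), (∀ i, act (f i) (c i) = 0) ∧ a = ∑ i ∈ t, c i := by
  induction t using Finset.induction with
  | empty =>
    intro a ha
    refine ⟨fun _ => 0, fun i => act_zero _, ?_⟩
    rw [Finset.prod_empty, act_one] at ha
    simpa using ha
  | @insert i t hi ih =>
    intro a ha
    have hco : IsCoprime (f i) (∏ j ∈ t, f j) :=
      IsCoprime.prod_right (fun j hj => hcop i j (fun h => hi (h ▸ hj)))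
    obtain ⟨U, V, hUV⟩ := hco
    set a1 := act (V * ∏ j ∈ t, f j) a with ha1
    set a2 := act (U * f i) a with ha2
    have hsplit : a = a2 + a1 := by
      rw [ha1, ha2, ← act_add_poly, hUV, act_one]
    have hfa1 : act (f i) a1 = 0 := by
      rw [ha1, ← act_mul,
        show f i * (V * ∏ j ∈ t, f j) = V * ∏ j ∈ insert i t, f j by
          rw [Finset.prod_insert hi]; ring,
        act_mul, ha, act_zero]
    have hta2 : act (∏ j ∈ t, f j) a2 = 0 := by
      rw [ha2, ← act_mul,
        show (∏ j ∈ t, f j) * (U * f i) = U * ∏ j ∈ insert i t, f j by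
          rw [Finset.prod_insert hi]; ring,
        act_mul, ha, act_zero]
    obtain ⟨c, hc, hsum⟩ := ih a2 hta2
    refine ⟨Function.update c i a1, ?_, ?_⟩
    · intro j
      rcases eq_or_ne j i with rfl | hji
      · rw [Function.update_self]; exact hfa1
      · rw [Function.update_of_ne hji]; exact hc j
    · rw [Finset.sum_insert hi, Function.update_self, hsplit, hsum]
      rw [show (∑ x ∈ t, Function.update c i a1 x) = ∑ x ∈ t, c x from
        Finset.sum_congr rfl (fun j hj =>
          Function.update_of_ne (fun h : j = i => hi (h ▸ hj)) _ _)]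
      ring

end

/-- If `a` and `b` satisfy linear recurrences with characteristic polynomials
`∏ᵢ (t - ρ i)^(p i)` and `∏ⱼ (t - σ j)^(q j)` (distinct nonzero roots), then the pointwise
product satisfies the recurrence with characteristic polynomial
`∏_{i,j : p i ≥ 1, q j ≥ 1} (t - ρ i * σ j)^(p i + q j - 1)`. -/
theorem stmt_4 {K : Type*} [Field K] (s u : ℕ) (ρ : Fin s → K) (σ : Fin u → K)
    (p : Fin s → ℕ) (q : Fin u → ℕ)
    (hρ : Function.Injective ρ) (hσ : Function.Injective σ)
    (hρ0 : ∀ i, ρ i ≠ 0) (hσ0 : ∀ j, σ j ≠ 0)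
    (a b : ℕ → K)
    (ha : SatisfiesLinRec a (∏ i : Fin s, ((X : K[X]) - C (ρ i)) ^ (p i)))
    (hb : SatisfiesLinRec b (∏ j : Fin u, ((X : K[X]) - C (σ j)) ^ (q j))) :
    SatisfiesLinRec (fun k => a k * b k)
      (∏ ij ∈ Finset.univ.filter (fun ij : Fin s × Fin u => 1 ≤ p ij.1 ∧ 1 ≤ q ij.2),
        ((X : K[X]) - C (ρ ij.1 * σ ij.2)) ^ (p ij.1 + q ij.2 - 1)) := by
  rw [sat_iff] at ha hb ⊢
  set S := Finset.univ.filter (fun ij : Fin s × Fin u => 1 ≤ p ij.1 ∧ 1 ≤ q ij.2) with hS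
  set χ := ∏ ij ∈ S, ((X : K[X]) - C (ρ ij.1 * σ ij.2)) ^ (p ij.1 + q ij.2 - 1) with hχ
  -- decompose a and b
  have hcopa : ∀ i j : Fin s, i ≠ j →
      IsCoprime (((X : K[X]) - C (ρ i)) ^ (p i)) (((X : K[X]) - C (ρ j)) ^ (p j)) := by
    intro i j hij
    exact (Polynomial.isCoprime_X_sub_C_of_isUnit_sub
      ((sub_ne_zero.mpr (fun h => hij (hρ h))).isUnit)).pow
  have hcopb : ∀ i j : Fin u, i ≠ j →
      IsCoprime (((X : K[X]) - C (σ i)) ^ (q i)) (((X : K[X]) - C (σ j)) ^ (q j)) := by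
    intro i j hij
    exact (Polynomial.isCoprime_X_sub_C_of_isUnit_sub
      ((sub_ne_zero.mpr (fun h => hij (hσ h))).isUnit)).pow
  obtain ⟨ca, hca, hsa⟩ := decomp _ hcopa Finset.univ a ha
  obtain ⟨cb, hcb, hsb⟩ := decomp _ hcopb Finset.univ b hb
  have hab : (fun k => a k * b k) = ∑ i : Fin s, ∑ j : Fin u, ca i * cb j := by
    have h0 : (fun k => a k * b k) = a * b := rfl
    rw [h0, hsa, hsb, Finset.sum_mul_sum]
  rw [hab, act_sum]
  refine Finset.sum_eq_zero (fun i _ => ?_)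
  rw [act_sum]
  refine Finset.sum_eq_zero (fun j _ => ?_)
  by_cases hpi : 1 ≤ p i
  · by_cases hqj : 1 ≤ q j
    · -- (i,j) ∈ S
      have hij : (i, j) ∈ S := by
        rw [hS]; simp [hpi, hqj]
      have hfac := Finset.mul_prod_erase S
        (fun ij : Fin s × Fin u => ((X : K[X]) - C (ρ ij.1 * σ ij.2)) ^ (p ij.1 + q ij.2 - 1))
        hij
      have hkey := key (ρ i) (σ j) (p i + q j) (p i) (q j) rfl hpi hqj
        (ca i) (cb j) (hca i) (hcb j)
      rw [hχ, ← hfac, mul_comm, act_mul, hkey, act_zero]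
    · have h0 : q j = 0 := by omega
      have : cb j = 0 := by
        have := hcb j
        rwa [h0, pow_zero, act_one] at this
      rw [this, mul_zero, act_zero]
  · have h0 : p i = 0 := by omega
    have : ca i = 0 := by
      have := hca i
      rwa [h0, pow_zero, act_one] at this
    rw [this, zero_mul, act_zero]
end

section
/- If a sequence a_k satisfies a linear recurrence with characteristic polynomial ∏_i (t−ρ_i)^{p_i} (distinct nonzero ρ_i), then for any fixed positive integer s, the subsequence a_{sk} (k = 0,1,2,…) satisfies a linear recurrence with characteristic polynomial ∏_i (t − ρ_i^s)^{p_i}. -/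
open Polynomial Finset

/-- The shift operator on sequences. -/
noncomputable def seqShift (K : Type*) [Field K] : (ℕ → K) →ₗ[K] (ℕ → K) where
  toFun a := fun k => a (k + 1)
  map_add' _ _ := rfl
  map_smul' _ _ := rfl

lemma seqShift_pow {K : Type*} [Field K] (n : ℕ) (a : ℕ → K) (k : ℕ) :
    ((seqShift K) ^ n) a k = a (k + n) := by
  induction n generalizing a k with
  | zero => rfl
  | succ n ih =>
    rw [pow_succ, Module.End.mul_apply]
    show ((seqShift K) ^ n) (fun j => a (j + 1)) k = a (k + (n + 1))
    rw [ih]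
    ring_nf

lemma aeval_seqShift_pow_apply {K : Type*} [Field K] (q : K[X]) (e : ℕ) (a : ℕ → K) (k : ℕ) :
    (Polynomial.aeval ((seqShift K) ^ e) q) a k
      = ∑ i ∈ Finset.range (q.natDegree + 1), q.coeff i * a (k + e * i) := by
  rw [Polynomial.aeval_eq_sum_range]
  simp only [LinearMap.coe_sum, Finset.sum_apply, LinearMap.smul_apply, Pi.smul_apply,
    smul_eq_mul, ← pow_mul, seqShift_pow, mul_comm e]

/-- If `a` satisfies a linear recurrence with characteristic polynomial `∏ᵢ (t - ρ i)^(p i)`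
(distinct nonzero `ρ i`), then for any fixed positive integer `s`, the subsequence
`k ↦ a (s * k)` satisfies a linear recurrence with characteristic polynomial
`∏ᵢ (t - (ρ i)^s)^(p i)`. -/
theorem stmt_5 {K : Type*} [Field K] (m : ℕ) (ρ : Fin m → K) (p : Fin m → ℕ)
    (hdist : Function.Injective ρ) (hne : ∀ i, ρ i ≠ 0)
    (a : ℕ → K)
    (ha : SatisfiesLinRec a (∏ i : Fin m, ((X : K[X]) - C (ρ i)) ^ (p i)))
    (s : ℕ) (hs : 0 < s)
    (hdist' : Function.Injective fun i => ρ i ^ s) :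
    SatisfiesLinRec (fun k => a (s * k))
      (∏ i : Fin m, ((X : K[X]) - C (ρ i ^ s)) ^ (p i)) := by
  intro k
  set q : K[X] := ∏ i : Fin m, ((X : K[X]) - C (ρ i ^ s)) ^ (p i) with hq
  set χ : K[X] := ∏ i : Fin m, ((X : K[X]) - C (ρ i)) ^ (p i) with hχ
  have hdvd : χ ∣ q.comp (X ^ s) := by
    rw [hq, Polynomial.prod_comp]
    apply Finset.prod_dvd_prod_of_dvd
    intro i _
    rw [Polynomial.pow_comp, Polynomial.sub_comp, Polynomial.X_comp, Polynomial.C_comp]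
    exact pow_dvd_pow_of_dvd
      (by simpa using sub_dvd_pow_sub_pow (X : K[X]) (C (ρ i)) s) _
  obtain ⟨R, hR⟩ := hdvd
  have hχ0 : (Polynomial.aeval (seqShift K) χ) a = 0 := by
    funext j
    rw [show seqShift K = (seqShift K) ^ 1 by rw [pow_one], aeval_seqShift_pow_apply]
    simpa using ha j
  have key : (Polynomial.aeval ((seqShift K) ^ s) q) a = 0 := by
    have h1 : Polynomial.aeval (seqShift K) (q.comp (X ^ s))
        = Polynomial.aeval ((seqShift K) ^ s) q := by
      rw [Polynomial.aeval_comp]; simp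
    rw [← h1, hR, mul_comm, map_mul, Module.End.mul_apply, hχ0, map_zero]
  have hk := congrFun key (s * k)
  rw [aeval_seqShift_pow_apply] at hk
  simpa [mul_add] using hk
end

section
/- Duplicating a column of a semi-standard augmented filling yields a semi-standard augmented filling; more precisely, if T is a filling with weakly decreasing rows in which no column contains two equal entries (in the same column or attacking positions), then inserting a copy of any column adjacent to itself creates no inversion triples among the duplicated pair of columns. -/
/-- An augmented filling is modelled by a shape `α` (row `i` occupies the boxes `(i, j)` with
`1 ≤ j ≤ α i`, together with the basement box `(i, 0)`) and an entry function `T`.  Suppose the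
rows of `T` are weakly decreasing and no column of `T` contains two equal entries.  If columns
`c` and `c + 1` are identical (as after duplicating a column), then no inversion triple of
type `A` or of type `B` has its boxes `a`, `b` in these two identical columns. -/
theorem stmt_13 (α : ℕ → ℕ) (T : ℕ → ℕ → ℕ) (c : ℕ)
    -- rows are weakly decreasing (including the basement column `j = 0`)
    (hrows : ∀ i j : ℕ, j + 1 ≤ α i → T i (j + 1) ≤ T i j)
    -- no column contains two equal entries
    (hcols : ∀ i i' j : ℕ, i ≠ i' → j ≤ α i → j ≤ α i' → T i j ≠ T i' j)
    -- columns `c` and `c + 1` are identical: same shape and same entries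
    (hshape : ∀ i, c + 1 ≤ α i ↔ c ≤ α i)
    (hdup : ∀ i, c + 1 ≤ α i → T i c = T i (c + 1)) :
    -- no type A inversion triple with `a = (r, c)`, `b = (r, c+1)`, `c`-box `= (r', c+1)`:
    (∀ r r' : ℕ, c + 1 ≤ α r → c + 1 ≤ α r' → r < r' → α r' ≤ α r →
      ¬(T r' (c + 1) ≤ T r c ∧ T r (c + 1) ≤ T r' (c + 1))) ∧
    -- no type B inversion triple with `a = (r, c)`, `b = (r, c+1)`, `c`-box `= (r'', c)`:
    (∀ r r'' : ℕ, c + 1 ≤ α r → c ≤ α r'' → r'' < r → α r'' < α r →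
      ¬(T r'' c ≤ T r c ∧ T r (c + 1) ≤ T r'' c)) := by
  constructor
  · rintro r r' hr hr' hlt _ ⟨h1, h2⟩
    have hd := hdup r hr
    exact hcols r r' (c + 1) hlt.ne hr hr' (le_antisymm (hd ▸ h2) (hd ▸ h1))
  · rintro r r'' hr hr'' hlt _ ⟨h1, h2⟩
    have hd := hdup r hr
    exact hcols r'' r c hlt.ne hr'' ((hshape r).mp hr)
      (le_antisymm h1 (hd ▸ h2))
end

section
/- Let β = (β_1,…,β_n) be a column of distinct positive integers and c = (c_1,…,c_n) a multiset of positive integers with distinct entries such that there is a bijective matching with β_i ≥ c_i for all i. Then there is exactly one arrangement of the entries c_1,…,c_n into a column to the right of β such that every row is weakly decreasing and there is no triple of boxes a (left column), b (right column, same row as a), c (right column, below b) with T(a) ≥ T(c) ≥ T(b). -/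
private lemma stmt_14_exists : ∀ (n : ℕ) (β c : Fin n → ℕ), Function.Injective c →
    (∃ τ : Equiv.Perm (Fin n), ∀ i, c (τ i) ≤ β i) →
    ∃ σ : Equiv.Perm (Fin n), (∀ i, c (σ i) ≤ β i) ∧
      ∀ i j : Fin n, i < j → c (σ j) ≤ β i → c (σ j) < c (σ i) := by
  intro n
  induction n with
  | zero =>
    intro β c _ _
    exact ⟨1, fun i => i.elim0, fun i => i.elim0⟩
  | succ n ih =>
    intro β c hc hτ
    obtain ⟨τ, hτ⟩ := hτ
    -- pick m maximizing c among entries ≤ β 0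
    set S : Finset (Fin (n + 1)) := Finset.univ.filter (fun x => c x ≤ β 0) with hS
    have hτ0S : τ 0 ∈ S := by simp [hS, hτ 0]
    obtain ⟨m, hmS, hmax⟩ := S.exists_max_image c ⟨τ 0, hτ0S⟩
    have hmβ : c m ≤ β 0 := by simpa [hS] using hmS
    -- modify τ so that it sends 0 to m
    set k : Fin (n + 1) := τ.symm m with hk
    set τ' : Equiv.Perm (Fin (n + 1)) := τ * Equiv.swap 0 k with hτ'
    have hτ'0 : τ' 0 = m := by
      simp [hτ', Equiv.swap_apply_left, hk]
    have hτ'le : ∀ i, c (τ' i) ≤ β i := by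
      intro i
      rcases eq_or_ne i 0 with rfl | hi0
      · rw [hτ'0]; exact hmβ
      rcases eq_or_ne i k with hik | hik
      · have h1 : τ' i = τ 0 := by
          rw [hik]; simp [hτ', Equiv.swap_apply_right]
        rw [h1]
        calc c (τ 0) ≤ c m := hmax _ hτ0S
          _ = c (τ i) := by rw [hik, hk, Equiv.apply_symm_apply]
          _ ≤ β i := hτ i
      · have : τ' i = τ i := by
          simp [hτ', Equiv.swap_apply_of_ne_of_ne hi0 hik]
        rw [this]; exact hτ i
    -- restrict to the smaller problem
    set β' : Fin n → ℕ := fun i => β i.succ with hβ'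
    set c' : Fin n → ℕ := fun i => c (m.succAbove i) with hc'
    have hc'inj : Function.Injective c' :=
      fun a b h => m.succAbove_right_injective (hc h)
    -- the matching for the smaller problem
    set E : Option (Fin n) ≃ Option (Fin n) :=
      (finSuccEquiv' (0 : Fin (n + 1))).symm.trans (τ'.trans (finSuccEquiv' m)) with hE
    have hEnone : E none = none := by
      simp [hE, finSuccEquiv'_symm_none, hτ'0, finSuccEquiv'_at]
    set ρ : Equiv.Perm (Fin n) := E.removeNone with hρ
    have hρ_spec : ∀ i : Fin n, τ' i.succ = m.succAbove (ρ i) := by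
      intro i
      have hne : ∃ y, E (some i) = some y := by
        rcases h : E (some i) with _ | y
        · exfalso
          have := E.injective (h.trans hEnone.symm)
          simp at this
        · exact ⟨y, rfl⟩
      have h1 : some (ρ i) = E (some i) := Equiv.removeNone_some E hne
      have hzero : (finSuccEquiv' (0 : Fin (n + 1))).symm (some i) = i.succ := by
        rw [finSuccEquiv'_symm_some, Fin.succAbove_zero]
      have h2 : E (some i) = finSuccEquiv' m (τ' i.succ) := by
        simp only [hE, Equiv.trans_apply, hzero]
      rw [h2] at h1
      have := congrArg (finSuccEquiv' m).symm h1
      rw [Equiv.symm_apply_apply, finSuccEquiv'_symm_some] at this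
      exact this.symm
    have hmatch' : ∃ ρ' : Equiv.Perm (Fin n), ∀ i, c' (ρ' i) ≤ β' i := by
      refine ⟨ρ, fun i => ?_⟩
      have := hτ'le i.succ
      rw [hρ_spec i] at this
      exact this
    obtain ⟨σ', hσ'le, hσ'inv⟩ := ih β' c' hc'inj hmatch'
    -- assemble the full permutation
    set σ : Equiv.Perm (Fin (n + 1)) :=
      (finSuccEquiv' (0 : Fin (n + 1))).trans ((σ'.optionCongr).trans (finSuccEquiv' m).symm)
      with hσ
    have hσ0 : σ 0 = m := by
      simp [hσ, finSuccEquiv'_at, finSuccEquiv'_symm_none]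
    have hσsucc : ∀ i : Fin n, σ i.succ = m.succAbove (σ' i) := by
      intro i
      have h0 : finSuccEquiv' (0 : Fin (n + 1)) i.succ = some i := by
        have h : i.succ = (0 : Fin (n + 1)).succAbove i := (congrFun Fin.succAbove_zero i).symm
        rw [h, finSuccEquiv'_succAbove]
      simp [hσ, h0, finSuccEquiv'_symm_some]
    refine ⟨σ, ?_, ?_⟩
    · intro i
      induction i using Fin.cases with
      | zero => rw [hσ0]; exact hmβ
      | succ i => rw [hσsucc i]; exact hσ'le i
    · intro i j hij hle
      induction j using Fin.cases with
      | zero => exact absurd hij (by simp)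
      | succ j =>
        rw [hσsucc j] at hle ⊢
        induction i using Fin.cases with
        | zero =>
          rw [hσ0]
          have hmem : m.succAbove (σ' j) ∈ S := by simp [hS, hle]
          have h1 : c (m.succAbove (σ' j)) ≤ c m := hmax _ hmem
          have h2 : c (m.succAbove (σ' j)) ≠ c m := by
            intro h
            exact m.succAbove_ne (σ' j) (hc h)
          exact lt_of_le_of_ne h1 h2
        | succ i =>
          rw [hσsucc i]
          exact hσ'inv i j (by exact_mod_cast Fin.succ_lt_succ_iff.mp hij) hle

/-- Let `β` be a basement column of `n` distinct entries and `c₁, …, cₙ` distinct entries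
admitting a bijective matching `τ` with `c (τ i) ≤ β i` for all `i`.  Then there is exactly
one arrangement `σ` of the entries into the column to the right of `β` (row `i` receiving
`c (σ i)`) such that rows are weakly decreasing and there is no type A inversion triple,
i.e. no rows `i < j` with `c (σ i) ≤ c (σ j) ≤ β i`. -/
theorem stmt_14 (n : ℕ) (β : Fin n → ℕ) (c : Fin n → ℕ)
    (hβ : Function.Injective β) (hc : Function.Injective c)
    (hmatch : ∃ τ : Equiv.Perm (Fin n), ∀ i, c (τ i) ≤ β i) :
    ∃! σ : Equiv.Perm (Fin n),
      (∀ i, c (σ i) ≤ β i) ∧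
        ∀ i j : Fin n, i < j → ¬(c (σ j) ≤ β i ∧ c (σ i) ≤ c (σ j)) := by
  obtain ⟨σ, hσle, hσinv⟩ := stmt_14_exists n β c hc hmatch
  refine ⟨σ, ⟨hσle, fun i j hij h => absurd (hσinv i j hij h.1) (not_lt.mpr h.2)⟩, ?_⟩
  rintro σ₂ ⟨h₂le, h₂inv⟩
  -- uniqueness: both determined row by row
  have key : ∀ N : ℕ, ∀ i : Fin n, i.val = N → σ₂ i = σ i := by
    intro N
    induction N using Nat.strong_induction_on with
    | _ N IH =>
      intro i hiN
      have IH' : ∀ k : Fin n, k < i → σ₂ k = σ k := fun k hk =>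
        IH k.val (hiN ▸ hk) k rfl
      by_contra hne
      -- where does σ₂ place σ i ?
      set j : Fin n := σ₂.symm (σ i) with hj
      have hj2 : σ₂ j = σ i := Equiv.apply_symm_apply _ _
      have hji : i < j := by
        rcases lt_trichotomy j i with h | h | h
        · exact absurd (σ.injective ((IH' j h).symm.trans hj2)) (ne_of_lt h)
        · exact absurd (h ▸ hj2) hne
        · exact h
      have fact1 : c (σ i) < c (σ₂ i) := by
        have := h₂inv i j hji
        rw [hj2] at this
        push_neg at this
        exact this (hσle i)
      set j' : Fin n := σ.symm (σ₂ i) with hj'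
      have hj'2 : σ j' = σ₂ i := Equiv.apply_symm_apply _ _
      have hj'i : i < j' := by
        rcases lt_trichotomy j' i with h | h | h
        · exact absurd (σ₂.injective ((IH' j' h).trans hj'2)) (ne_of_lt h)
        · exact absurd (h ▸ hj'2).symm hne
        · exact h
      have fact2 : c (σ₂ i) < c (σ i) := by
        have := hσinv i j' hj'i
        rw [hj'2] at this
        exact this (h₂le i)
      exact absurd fact1 (not_lt.mpr fact2.le)
  exact Equiv.ext fun i => key i.val i rfl
end
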